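/- Fix M ∈ {1,...,m}, η ∈ (0,1), and α ∈ (0,1) with η ≤ αM/m. Let S_{k+1},...,S_n be null scores satisfying 1 + Σ_{i=k+1}^n 1{S_i ≥ 0} ≤ ηℓ where ℓ = n−k, and let S_{n+1},...,S_{n+m} be test scores satisfying Σ_{j=1}^m 1{S_{n+j} ≥ 0} ≥ M. Define empirical p-values p_j = (1/(ℓ+1))(1 + Σ_{i=k+1}^n 1{S_i > S_{n+j}}). Then the BH procedure at level α applied to (p₁,...,p_m) rejects all hypotheses j with S_{n+j} ≥ 0. -/
import Mathlib


open Finset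

/-- The number of rejections of the BH procedure at level `α` applied to the
`p`-values `p : Fin m → ℝ`. -/
noncomputable def bhCount (α : ℝ) (m : ℕ) (p : Fin m → ℝ) : ℕ :=
  ((Finset.range (m + 1)).filter
    (fun k : ℕ =>
      k ≤ (Finset.univ.filter (fun j : Fin m => p j ≤ α * (k : ℝ) / m)).card)).sup id

/-- If at most `η ℓ` null scores (including a `+1`) are nonnegative while at
least `M` test scores are nonnegative, and `η ≤ α M / m`, then the BH
procedure at level `α` applied to the empirical `p`-values rejects every
hypothesis with a nonnegative score. -/
theorem bh_rejects_nonnegative_scores (ℓ m M : ℕ) (hM1 : 1 ≤ M) (hMm : M ≤ m)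
    (η α : ℝ) (hη : η ∈ Set.Ioo (0 : ℝ) 1) (hα : α ∈ Set.Ioo (0 : ℝ) 1)
    (hηα : η ≤ α * M / m)
    (S : Fin ℓ → ℝ) (T : Fin m → ℝ)
    (hnull : 1 + ((Finset.univ.filter (fun i : Fin ℓ => 0 ≤ S i)).card : ℝ) ≤ η * ℓ)
    (htest : M ≤ (Finset.univ.filter (fun j : Fin m => 0 ≤ T j)).card)
    (p : Fin m → ℝ)
    (hp : ∀ j, p j = ((ℓ : ℝ) + 1)⁻¹ *
      (1 + ((Finset.univ.filter (fun i : Fin ℓ => S i > T j)).card : ℝ))) :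
    ∀ j : Fin m, 0 ≤ T j → p j ≤ α * (bhCount α m p) / m := by
  have hm0 : 0 < (m : ℝ) := by exact_mod_cast lt_of_lt_of_le hM1 hMm
  have hℓ1 : (0:ℝ) < (ℓ : ℝ) + 1 := by positivity
  -- every nonnegative test score has p-value ≤ α M / m
  have key : ∀ j : Fin m, 0 ≤ T j → p j ≤ α * M / m := by
    intro j hj
    have hsub : (Finset.univ.filter (fun i : Fin ℓ => S i > T j)) ⊆
        (Finset.univ.filter (fun i : Fin ℓ => 0 ≤ S i)) := by
      intro i hi
      simp only [mem_filter, mem_univ, true_and] at hi ⊢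
      exact le_of_lt (lt_of_le_of_lt hj hi)
    have hcard : ((Finset.univ.filter (fun i : Fin ℓ => S i > T j)).card : ℝ) ≤
        ((Finset.univ.filter (fun i : Fin ℓ => 0 ≤ S i)).card : ℝ) := by
      exact_mod_cast Finset.card_le_card hsub
    have h1 : p j ≤ ((ℓ : ℝ) + 1)⁻¹ * (η * ℓ) := by
      rw [hp j]
      apply mul_le_mul_of_nonneg_left _ (by positivity)
      linarith
    have h2 : ((ℓ : ℝ) + 1)⁻¹ * (η * ℓ) ≤ η := by
      rw [inv_mul_le_iff₀ hℓ1]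
      nlinarith [hη.1]
    linarith [h1, h2, hηα]
  intro j hj
  have hMle : M ≤ bhCount α m p := by
    have hmem : M ∈ (Finset.range (m + 1)).filter
        (fun k : ℕ =>
          k ≤ (Finset.univ.filter (fun j : Fin m => p j ≤ α * (k : ℝ) / m)).card) := by
      rw [mem_filter, Finset.mem_range]
      refine ⟨Nat.lt_succ_of_le hMm, ?_⟩
      refine le_trans htest (Finset.card_le_card ?_)
      intro x hx
      simp only [mem_filter, mem_univ, true_and] at hx ⊢
      exact key x hx
    exact Finset.le_sup (f := id) hmem
  have : α * (M : ℝ) / m ≤ α * (bhCount α m p : ℝ) / m := by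
    have : (M:ℝ) ≤ (bhCount α m p : ℝ) := by exact_mod_cast hMle
    gcongr
    exact hα.1.le
  exact le_trans (key j hj) this
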